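/- arXiv:1704.06785 — 2 statements merged into one kernel-verified Lean document; each statement's English description precedes it below -/
import Mathlib

section
/- For integers N, K, T with K ≥ 2, T ≥ 2, and T + K ≤ N, the strict inequality 1 − C(N−T,K)/C(N,K) > (T + K − 1)/N holds. -/
lemma key_ineq (K : ℕ) (hK : 2 ≤ K) : ∀ M N : ℕ, K ≤ M → M + 2 ≤ N →
    N * M.choose K < (M - K + 1) * N.choose K := by
  induction K, hK using Nat.le_induction with
  | base =>
    intro M N hM hN
    have c2 : ∀ n : ℕ, n.choose 2 * 2 = n * (n - 1) := by
      intro n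
      simpa [Nat.choose_one_right] using Nat.choose_succ_right_eq n 1
    apply lt_of_mul_lt_mul_right _ (Nat.zero_le 2)
    rw [mul_assoc, mul_assoc, c2, c2]
    have h1 : M - 2 + 1 = M - 1 := by omega
    rw [h1]
    obtain ⟨a, rfl⟩ : ∃ a, M = a + 2 := ⟨M - 2, by omega⟩
    obtain ⟨b, rfl⟩ : ∃ b, N = a + 4 + b := ⟨N - (a + 4), by omega⟩
    have e1 : a + 2 - 1 = a + 1 := by omega
    have e2 : a + 4 + b - 1 = a + 3 + b := by omega
    rw [e1, e2]
    calc (a + 4 + b) * ((a + 2) * (a + 1))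
        = (a + 2) * ((a + 1) * (a + 4 + b)) := by ring
      _ < (a + 3 + b) * ((a + 1) * (a + 4 + b)) :=
          Nat.mul_lt_mul_of_lt_of_le (by omega) le_rfl (by positivity)
      _ = (a + 1) * ((a + 4 + b) * (a + 3 + b)) := by ring
  | succ K hK ih =>
    intro M N hM hN
    have h1 : K ≤ M := by omega
    apply lt_of_mul_lt_mul_right _ (Nat.zero_le (K + 1))
    rw [mul_assoc, Nat.choose_succ_right_eq, mul_assoc, Nat.choose_succ_right_eq]
    have h2 : M - (K + 1) + 1 = M - K := by omega
    rw [h2]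
    have hMK : 1 ≤ M - K := by omega
    have ihh := ih M N h1 hN
    have h3 : N * M.choose K < (N - K) * N.choose K :=
      lt_of_lt_of_le ihh (Nat.mul_le_mul_right _ (by omega))
    calc N * (M.choose K * (M - K)) = (N * M.choose K) * (M - K) := by ring
      _ < ((N - K) * N.choose K) * (M - K) := by
          exact Nat.mul_lt_mul_of_lt_of_le h3 le_rfl hMK
      _ = (M - K) * (N.choose K * (N - K)) := by ring

theorem stmt_8 (N K T : ℕ) (hK : 2 ≤ K) (hT : 2 ≤ T) (hTK : T + K ≤ N) :
    1 - ((N - T).choose K : ℝ) / (N.choose K) > ((T : ℝ) + K - 1) / N := by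
  have hM : K ≤ N - T := by omega
  have hN2 : (N - T) + 2 ≤ N := by omega
  have hkey := key_ineq K hK (N - T) N hM hN2
  have hnat : N * (N - T).choose K + (T + K - 1) * N.choose K < N * N.choose K := by
    have he : (N - T - K + 1) + (T + K - 1) = N := by omega
    calc N * (N - T).choose K + (T + K - 1) * N.choose K
        < (N - T - K + 1) * N.choose K + (T + K - 1) * N.choose K := by
          exact Nat.add_lt_add_right hkey _
      _ = N * N.choose K := by rw [← Nat.add_mul, he]
  have hb : (0 : ℝ) < N.choose K := by
    exact_mod_cast Nat.choose_pos (by omega : K ≤ N)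
  have hNpos : (0 : ℝ) < N := by exact_mod_cast (by omega : 0 < N)
  have hcast : (N : ℝ) * (N - T).choose K + ((T : ℝ) + K - 1) * N.choose K
      < N * N.choose K := by
    have h := (Nat.cast_lt (α := ℝ)).mpr hnat
    push_cast [Nat.cast_sub (by omega : 1 ≤ T + K)] at h
    linarith
  rw [gt_iff_lt, div_lt_iff₀ hNpos]
  have hq : ((N - T).choose K : ℝ) / N.choose K * N.choose K = (N - T).choose K :=
    div_mul_cancel₀ _ (ne_of_gt hb)
  nlinarith [hq, hb, hNpos]
end

section
/- For integers N, K, T with K ≥ 2, T ≥ 2 and T + K ≤ N, the strict inequality (N − K − T + 1)/N > C(N−T,K)/C(N,K) holds. -/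
lemma ident_aux (n k : ℕ) (h : k ≤ n + 1) :
    (n.choose k : ℝ) * (n + 1) = ((n + 1).choose k : ℝ) * ((n : ℝ) + 1 - k) := by
  have := Nat.choose_mul_succ_eq n k
  have h' : ((n + 1 - k : ℕ) : ℝ) = (n : ℝ) + 1 - k := by
    push_cast [Nat.cast_sub h]; ring
  calc (n.choose k : ℝ) * (n + 1) = ((n.choose k * (n + 1) : ℕ) : ℝ) := by push_cast; ring
    _ = (((n + 1).choose k * (n + 1 - k) : ℕ) : ℝ) := by rw [this]
    _ = ((n + 1).choose k : ℝ) * ((n : ℝ) + 1 - k) := by push_cast [h']; ring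

lemma key_aux (N K : ℕ) (hK : 2 ≤ K) (T : ℕ) (hT : 2 ≤ T) : T + K ≤ N →
    ((N : ℝ) - K - T + 1) * (N.choose K) > N * ((N - T).choose K : ℝ) := by
  induction T, hT using Nat.le_induction with
  | base =>
    intro hTK
    have hKN : K ≤ N := le_trans (Nat.le_add_left K 2) hTK
    have h1 : ((N - 1).choose K : ℝ) * N = (N.choose K : ℝ) * ((N : ℝ) - K) := by
      have hN1 : 1 ≤ N := le_trans (by omega) hTK
      have := ident_aux (N - 1) K (by omega)
      rwa [Nat.sub_add_cancel hN1, Nat.cast_sub hN1, Nat.cast_one, sub_add_cancel] at this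
    have h2 : ((N - 2).choose K : ℝ) * ((N : ℝ) - 1) = ((N - 1).choose K : ℝ) * ((N : ℝ) - 1 - K) := by
      have hN2 : 2 ≤ N := le_trans (by omega) hTK
      have := ident_aux (N - 2) K (by omega)
      have e1 : N - 2 + 1 = N - 1 := by omega
      have e2 : ((N - 2 : ℕ) : ℝ) + 1 = (N : ℝ) - 1 := by
        rw [Nat.cast_sub hN2]; push_cast; ring
      rwa [e1, e2] at this
    have hC : 0 < (N.choose K : ℝ) := by
      exact_mod_cast Nat.choose_pos hKN
    have hC1 : (0 : ℝ) ≤ ((N - 1).choose K : ℝ) := Nat.cast_nonneg _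
    have hKr : (2 : ℝ) ≤ K := by exact_mod_cast hK
    have hNr : (K : ℝ) + 2 ≤ N := by exact_mod_cast (by omega : K + 2 ≤ N)
    have hNpos : (0 : ℝ) < N := by exact_mod_cast (by omega : 0 < N)
    have e : (N : ℝ) * ((N - 2).choose K : ℝ) * ((N : ℝ) - 1) =
        (N.choose K : ℝ) * ((N : ℝ) - K) * ((N : ℝ) - 1 - K) := by
      linear_combination (N : ℝ) * h2 + ((N : ℝ) - 1 - K) * h1
    push_cast
    nlinarith [e, mul_pos (mul_pos hC (by linarith : (0:ℝ) < (N:ℝ) - K - 1))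
      (by linarith : (0:ℝ) < (K:ℝ) - 1), (by linarith : (0:ℝ) < (N:ℝ) - 1)]
  | succ T hT2 IH =>
    intro hTK
    have hTKN : T + K ≤ N := by omega
    have ih := IH hTKN
    have hKNT : K ≤ N - T := by omega
    have h1 : ((N - (T + 1)).choose K : ℝ) * ((N : ℝ) - T) =
        ((N - T).choose K : ℝ) * ((N : ℝ) - T - K) := by
      have := ident_aux (N - T - 1) K (by omega)
      have e1 : N - T - 1 + 1 = N - T := by omega
      have e2 : ((N - T - 1 : ℕ) : ℝ) + 1 = (N : ℝ) - T := by
        rw [Nat.cast_sub (by omega : 1 ≤ N - T), Nat.cast_sub (by omega : T ≤ N)]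
        push_cast; ring
      have e3 : N - (T + 1) = N - T - 1 := by omega
      rw [e3]
      rwa [e1, e2] at this
    have hC : 0 < (N.choose K : ℝ) := by
      exact_mod_cast Nat.choose_pos (by omega : K ≤ N)
    have hC2 : (0 : ℝ) ≤ ((N - T).choose K : ℝ) := Nat.cast_nonneg _
    have hKr : (2 : ℝ) ≤ K := by exact_mod_cast hK
    have hTr : (2 : ℝ) ≤ T := by exact_mod_cast hT2
    have hNr : (T : ℝ) + 1 + K ≤ N := by exact_mod_cast hTK
    have hNT : (0 : ℝ) < (N : ℝ) - T := by linarith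
    have hNTK : (1 : ℝ) ≤ (N : ℝ) - T - K := by linarith
    have hNpos : (0 : ℝ) < N := by linarith
    have e : (N : ℝ) * ((N - (T + 1)).choose K : ℝ) * ((N : ℝ) - T) =
        (N : ℝ) * ((N - T).choose K : ℝ) * ((N : ℝ) - T - K) := by
      linear_combination (N : ℝ) * h1
    have ihm := mul_lt_mul_of_pos_right ih (by linarith : (0:ℝ) < (N:ℝ) - T - K)
    push_cast
    nlinarith [e, ihm, hNT, mul_nonneg hC.le
      (by nlinarith : (0:ℝ) ≤ ((N:ℝ) - K - T) * ((K:ℝ) - 1))]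

theorem stmt_11 (N K T : ℕ) (hK : 2 ≤ K) (hT : 2 ≤ T) (hTK : T + K ≤ N) :
    ((N : ℝ) - K - T + 1) / N > ((N - T).choose K : ℝ) / (N.choose K) := by
  have hC : (0 : ℝ) < N.choose K := by
    exact_mod_cast Nat.choose_pos (by omega : K ≤ N)
  have hN : (0 : ℝ) < N := by
    have : 0 < N := by omega
    exact_mod_cast this
  rw [gt_iff_lt, div_lt_div_iff₀ hC hN]
  have := key_aux N K hK T hT hTK
  nlinarith [this]
end
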